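/- Let (M, □_M) be a T0-algebra, (N, □_N) an MT-algebra, and let h, g : M → N be MT-morphisms, i.e. complete Boolean homomorphisms (preserving arbitrary suprema and complements) satisfying h(□_M a) ≤ □_N h(a) and g(□_M a) ≤ □_N g(a) for all a ∈ M. If h(a) = g(a) for every open element a of M, then h = g. -/

import Mathlib

universe u

/-- An MT-algebra: a complete Boolean algebra equipped with an interior operator. -/
structure MTAlg (M : Type u) [CompleteBooleanAlgebra M] where
  box : M → M
  box_top : box ⊤ = ⊤
  box_inf : ∀ a b : M, box (a ⊓ b) = box a ⊓ box b
  box_le : ∀ a : M, box a ≤ a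
  box_idem : ∀ a : M, box a ≤ box (box a)

namespace MTAlg

variable {M : Type u} [CompleteBooleanAlgebra M] (T : MTAlg M)

/-- The closure operator `◇a = (□(aᶜ))ᶜ`. -/
def dia (a : M) : M := (T.box aᶜ)ᶜ

/-- An element is open if `□a = a`. -/
def IsOp (a : M) : Prop := T.box a = a

/-- An element is closed if `◇a = a`. -/
def IsCl (a : M) : Prop := T.dia a = a

/-- The set `O(M)` of open elements. -/
def opens : Set M := {a | T.IsOp a}

/-- The set `C(M)` of closed elements. -/
def closeds : Set M := {a | T.IsCl a}

/-- A subset join-generates `M` if every element of `M` is a supremum of a subset of it. -/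
def JoinGenerates (S : Set M) : Prop := ∀ a : M, ∃ B ⊆ S, a = sSup B

theorem box_mono {a b : M} (h : a ≤ b) : T.box a ≤ T.box b := by
  have hab : a ⊓ b = a := inf_eq_left.mpr h
  calc T.box a = T.box (a ⊓ b) := by rw [hab]
    _ = T.box a ⊓ T.box b := T.box_inf a b
    _ ≤ T.box b := inf_le_right

theorem isOp_sSup {S : Set M} (h : ∀ a ∈ S, T.IsOp a) : T.IsOp (sSup S) := by
  refine le_antisymm (T.box_le _) (sSup_le fun a ha => ?_)
  calc a = T.box a := (h a ha).symm
    _ ≤ T.box (sSup S) := T.box_mono (le_sSup ha)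

theorem atom_le_sSup {x : M} (hx : IsAtom x) {S : Set M} (h : x ≤ sSup S) :
    ∃ s ∈ S, x ≤ s := by
  by_contra hc
  push_neg at hc
  have h2 : ∀ b ∈ S, x ⊓ b = ⊥ := by
    intro b hb
    rcases hx.le_iff.mp (inf_le_left : x ⊓ b ≤ x) with h' | h'
    · exact h'
    · exact absurd (h' ▸ inf_le_right) (hc b hb)
  have h3 : x ⊓ sSup S = ⊥ := by
    rw [inf_sSup_eq]
    simp only [iSup_eq_bot]
    intro b hb
    exact h2 b hb
  have hx' : x = ⊥ := by
    rw [inf_eq_left.mpr h] at h3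
    exact h3
  exact hx.1 hx'

/-- `η(a)` : the set of atoms below `a`. -/
def eta (a : M) : Set {x : M // IsAtom x} := {x | (x : M) ≤ a}

/-- The topology `τ = {η(a) | a ∈ O(M)}` on the set of atoms of `M`. -/
def atomTopology : TopologicalSpace {x : M // IsAtom x} where
  IsOpen U := ∃ a : M, T.IsOp a ∧ U = eta a
  isOpen_univ := ⟨⊤, T.box_top, by ext x; simp [eta]⟩
  isOpen_inter := by
    rintro U V ⟨a, ha, rfl⟩ ⟨b, hb, rfl⟩
    refine ⟨a ⊓ b, ?_, ?_⟩
    · show T.box (a ⊓ b) = a ⊓ b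
      rw [T.box_inf, ha, hb]
    · ext x
      simp [eta, le_inf_iff]
  isOpen_sUnion := by
    intro C hC
    refine ⟨sSup {a | T.IsOp a ∧ eta a ∈ C}, T.isOp_sSup (fun a ha => ha.1), ?_⟩
    ext x
    constructor
    · rintro ⟨U, hU, hxU⟩
      obtain ⟨a, ha, rfl⟩ := hC U hU
      exact le_trans hxU (le_sSup ⟨ha, hU⟩)
    · intro hx
      obtain ⟨s, hs, hxs⟩ := atom_le_sSup x.2 hx
      exact ⟨eta s, hs.2, hxs⟩

/-- A completely prime filter of the frame `O(M)` (with arbitrary suprema computed in `M`). -/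
structure IsCPF (p : Set M) : Prop where
  subset_opens : p ⊆ T.opens
  top_mem : ⊤ ∈ p
  bot_notMem : ⊥ ∉ p
  mem_of_le : ∀ a ∈ p, ∀ b ∈ T.opens, a ≤ b → b ∈ p
  inf_mem : ∀ a ∈ p, ∀ b ∈ p, a ⊓ b ∈ p
  prime : ∀ S ⊆ T.opens, sSup S ∈ p → ∃ s ∈ S, s ∈ p

/-- The underlying set of `θ(x) = {a ∈ O(M) | x ≤ a}`. -/
def thetaSet (x : M) : Set M := {a | T.IsOp a ∧ x ≤ a}

/-- An element is saturated if it is an infimum of a set of open elements. -/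
def IsSat (a : M) : Prop := ∃ S ⊆ T.opens, a = sInf S

/-- Weakly locally closed: the infimum of a saturated element and a closed element. -/
def IsWLC (a : M) : Prop := ∃ s c : M, T.IsSat s ∧ T.IsCl c ∧ a = s ⊓ c

/-- Locally closed: the infimum of an open element and a closed element. -/
def IsLC (a : M) : Prop := ∃ u c : M, T.IsOp u ∧ T.IsCl c ∧ a = u ⊓ c

/-- `M` is a `T₀`-algebra if the weakly locally closed elements join-generate `M`. -/
def T0 : Prop := JoinGenerates {a | T.IsWLC a}

/-- `M` is a `T_{1/2}`-algebra if the locally closed elements join-generate `M`. -/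
def THalf : Prop := JoinGenerates {a | T.IsLC a}

/-- `M` is a `T₁`-algebra if the closed elements join-generate `M`. -/
def T1 : Prop := JoinGenerates T.closeds

/-- A join-irreducible element of `C(M)`. -/
def JoinIrred (p : M) : Prop :=
  T.IsCl p ∧ p ≠ ⊥ ∧ ∀ a b : M, T.IsCl a → T.IsCl b → p = a ⊔ b → p = a ∨ p = b

/-- `M` is weakly sober if every join-irreducible element of `C(M)` is `◇x` for some atom `x`. -/
def WeaklySober : Prop := ∀ p : M, T.JoinIrred p → ∃ x : M, IsAtom x ∧ p = T.dia x

/-- `M` is sober if it is weakly sober and a `T₀`-algebra. -/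
def Sober : Prop := T.WeaklySober ∧ T.T0

/-- `a ∈ GC(M)` : `a` is approximated from above by regular closed elements. -/
def IsGC (a : M) : Prop := a = sInf {b | ∃ c : M, a ≤ T.box c ∧ b = T.dia (T.box c)}

/-- `M` is a Hausdorff (T₂) algebra if `GC(M)` join-generates `M`. -/
def Hausdorff : Prop := JoinGenerates {a | T.IsGC a}

/-- `a ◁ b` iff `◇a ≤ □b`. -/
def tri (a b : M) : Prop := T.dia a ≤ T.box b

/-- `M` is a regular (T₃) algebra. -/
def Regular : Prop :=
  T.T1 ∧ ∀ a : M, T.IsOp a → a = sSup {b | T.IsOp b ∧ T.tri b a}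

/-- `a ◁◁ b` : there is a family `(c_p)` indexed by `p ∈ ℚ ∩ [0,1]` interpolating
between `a` and `b` with `c_p ◁ c_q` whenever `p < q`. -/
def triQ (a b : M) : Prop :=
  ∃ c : ℚ → M, a ≤ c 0 ∧ c 1 ≤ b ∧
    ∀ p q : ℚ, 0 ≤ p → p < q → q ≤ 1 → T.tri (c p) (c q)

/-- `M` is a completely regular (T₃½) algebra. -/
def CompletelyRegular : Prop :=
  T.T1 ∧ ∀ a : M, T.IsOp a → a = sSup {b | T.IsOp b ∧ T.triQ b a}

/-- The pseudocomplement of `b` in the frame `O(M)`. -/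
def pstarO (b : M) : M := sSup {u | T.IsOp u ∧ u ⊓ b = ⊥}

/-- The rather-below relation `b ≺ a` in the frame `O(M)`. -/
def precO (b a : M) : Prop := T.pstarO b ⊔ a = ⊤

/-- The completely-below relation `b ≺≺ a` in the frame `O(M)`. -/
def precQO (b a : M) : Prop :=
  ∃ c : ℚ → M, (∀ p : ℚ, 0 ≤ p → p ≤ 1 → T.IsOp (c p)) ∧ b ≤ c 0 ∧ c 1 ≤ a ∧
    ∀ p q : ℚ, 0 ≤ p → p < q → q ≤ 1 → T.precO (c p) (c q)

/-- The frame `O(M)` is completely regular. -/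
def FrameCompletelyRegular : Prop :=
  ∀ a : M, T.IsOp a → a = sSup {b | T.IsOp b ∧ T.precQO b a}

/-- `M` is a normal (T₄) algebra. -/
def Normal : Prop :=
  T.T1 ∧ ∀ c d : M, T.IsCl c → T.IsCl d → c ⊓ d = ⊥ →
    ∃ a b : M, T.IsOp a ∧ T.IsOp b ∧ a ⊓ b = ⊥ ∧ c ≤ a ∧ d ≤ b

end MTAlg


section Aux
variable {M : Type*} {N : Type*} [CompleteBooleanAlgebra M] [CompleteBooleanAlgebra N]

lemma aux_compl_sSup_image (S : Set M) : (sSup (Compl.compl '' S))ᶜ = sInf S := by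
  rw [sSup_image]; simp [compl_iSup, sInf_eq_iInf]

lemma aux_sInf (h : M → N) (hsup : ∀ A : Set M, h (sSup A) = sSup (h '' A))
    (hcompl : ∀ a : M, h aᶜ = (h a)ᶜ) (A : Set M) : h (sInf A) = sInf (h '' A) := by
  have himg : h '' (Compl.compl '' A) = Compl.compl '' (h '' A) := by
    ext x
    simp only [Set.mem_image, exists_exists_and_eq_and]
    constructor
    · rintro ⟨a, ha, rfl⟩; exact ⟨a, ha, (hcompl a).symm⟩
    · rintro ⟨a, ha, rfl⟩; exact ⟨a, ha, hcompl a⟩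
  calc h (sInf A) = h (sSup (Compl.compl '' A))ᶜ := by rw [aux_compl_sSup_image]
    _ = (h (sSup (Compl.compl '' A)))ᶜ := hcompl _
    _ = (sSup (h '' (Compl.compl '' A)))ᶜ := by rw [hsup]
    _ = (sSup (Compl.compl '' (h '' A)))ᶜ := by rw [himg]
    _ = sInf (h '' A) := aux_compl_sSup_image _

lemma aux_inf (h : M → N) (hsup : ∀ A : Set M, h (sSup A) = sSup (h '' A))
    (hcompl : ∀ a : M, h aᶜ = (h a)ᶜ) (x y : M) : h (x ⊓ y) = h x ⊓ h y := by
  have := aux_sInf h hsup hcompl {x, y}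
  simpa [Set.image_insert_eq] using this

end Aux

/-- two MT-morphisms out of a `T₀`-algebra that agree on all open elements
are equal. -/
theorem statement5 {M : Type u} {N : Type v} [CompleteBooleanAlgebra M]
    [CompleteBooleanAlgebra N] (T : MTAlg M) (S : MTAlg N) (h g : M → N)
    (hT0 : T.T0)
    (hsup : ∀ A : Set M, h (sSup A) = sSup (h '' A))
    (hcompl : ∀ a : M, h aᶜ = (h a)ᶜ)
    (hbox : ∀ a : M, h (T.box a) ≤ S.box (h a))
    (gsup : ∀ A : Set M, g (sSup A) = sSup (g '' A))
    (gcompl : ∀ a : M, g aᶜ = (g a)ᶜ)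
    (gbox : ∀ a : M, g (T.box a) ≤ S.box (g a))
    (heq : ∀ a : M, T.IsOp a → h a = g a) :
    h = g := by
  funext a
  obtain ⟨B, hB, rfl⟩ := hT0 a
  have key : ∀ b ∈ B, h b = g b := by
    intro b hb
    obtain ⟨s, c, ⟨Sset, hSop, rfl⟩, hc, rfl⟩ := hB hb
    have hopen : ∀ x : M, T.IsOp x → h x = g x := heq
    have hs : h (sInf Sset) = g (sInf Sset) := by
      rw [aux_sInf h hsup hcompl, aux_sInf g gsup gcompl]
      congr 1
      ext y
      simp only [Set.mem_image]
      constructor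
      · rintro ⟨x, hx, rfl⟩; exact ⟨x, hx, (heq x (hSop hx)).symm⟩
      · rintro ⟨x, hx, rfl⟩; exact ⟨x, hx, heq x (hSop hx)⟩
    have hcop : T.IsOp cᶜ := by
      have : (T.box cᶜ)ᶜ = c := hc
      have := congrArg Compl.compl this
      simpa [MTAlg.IsOp] using this
    have hcc : h c = g c := by
      have h1 : h c = (h cᶜ)ᶜ := by rw [hcompl, compl_compl]
      have h2 : g c = (g cᶜ)ᶜ := by rw [gcompl, compl_compl]
      rw [h1, h2, heq _ hcop]
    rw [aux_inf h hsup hcompl, aux_inf g gsup gcompl, hs, hcc]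
  rw [hsup, gsup]
  congr 1
  ext y
  simp only [Set.mem_image]
  constructor
  · rintro ⟨x, hx, rfl⟩; exact ⟨x, hx, (key x hx).symm⟩
  · rintro ⟨x, hx, rfl⟩; exact ⟨x, hx, key x hx⟩
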